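/- Let w be a freely reduced word of rank i with rank-i piece decomposition w = π_1 ⋯ π_p. Then for k = 1, …, p−1, the words φ^{±1}(π_k) and φ^{±1}(π_{k+1}) end and begin, respectively, with letters that are not mutually inverse. Consequently, for every r ∈ ℤ the concatenation φ^r(π_1) ⋯ φ^r(π_p) is freely reduced and is the rank-i piece decomposition of φ^r(w). -/

import Mathlib

open FreeGroup SemidirectProduct

/-- Words on the letters `a₁^{±1}, …, a_m^{±1}` (`(i, true)` is `a_{i+1}`,
`(i, false)` is `a_{i+1}⁻¹`, with 0-based `Fin`-indexing of the generators). -/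
abbrev FWord (m : ℕ) := List (Fin m × Bool)

/-- A word is freely reduced. -/
def Reduced {m : ℕ} (w : FWord m) : Prop := FreeGroup.reduce w = w

/-- `φ` is the automorphism of `F = F(a₁, …, a_m)` with `φ(a₁) = a₁` and
`φ(aᵢ) = aᵢ aᵢ₋₁` for `2 ≤ i ≤ m`. -/
def IsHydraAut (m : ℕ) (φ : FreeGroup (Fin m) ≃* FreeGroup (Fin m)) : Prop :=
  ∀ i : Fin m, φ (FreeGroup.of i) =
    if i.val = 0 then FreeGroup.of i
    else FreeGroup.of i *
      FreeGroup.of (⟨i.val - 1, Nat.lt_of_le_of_lt (Nat.sub_le _ _) i.isLt⟩ : Fin m)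

/-- The free-by-cyclic group `H_m = F ⋊_φ ℤ`; here `s = inr (ofAdd 1)` and the defining
relation `s⁻¹ aᵢ s = φ(aᵢ)` holds.  The normal form `ũ s^p` is the element
`⟨ũ, Multiplicative.ofAdd p⟩`. -/
abbrev Hgrp (m : ℕ) (φ : FreeGroup (Fin m) ≃* FreeGroup (Fin m)) :=
  FreeGroup (Fin m) ⋊[zpowersHom (MulAut (FreeGroup (Fin m))) φ⁻¹] Multiplicative ℤ

/-- Letters of words over the generators of `H_m`: `some i` is `a_{i+1}`, `none` is `s`. -/
abbrev HWord (m : ℕ) := List (Option (Fin m) × Bool)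

def hLetter {m : ℕ} (φ : FreeGroup (Fin m) ≃* FreeGroup (Fin m)) (x : Option (Fin m) × Bool) :
    Hgrp m φ :=
  match x.1 with
  | some i => cond x.2 (SemidirectProduct.inl (FreeGroup.of i))
      (SemidirectProduct.inl (FreeGroup.of i))⁻¹
  | none => cond x.2 (SemidirectProduct.inr (Multiplicative.ofAdd (1:ℤ)))
      (SemidirectProduct.inr (Multiplicative.ofAdd (1:ℤ)))⁻¹

/-- The element of `H_m` represented by a word on `a₁^{±1}, …, a_m^{±1}, s^{±1}`. -/
def evalH {m : ℕ} (φ : FreeGroup (Fin m) ≃* FreeGroup (Fin m)) (w : HWord m) : Hgrp m φ :=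
  (w.map (hLetter φ)).prod

/-- Word length in `H_m` w.r.t. the generating set `{a₁, …, a_m, s}`. -/
noncomputable def lenH {m : ℕ} (φ : FreeGroup (Fin m) ≃* FreeGroup (Fin m)) (g : Hgrp m φ) : ℕ :=
  sInf {n | ∃ w : HWord m, evalH φ w = g ∧ w.length = n}

/-- Word length in `F` w.r.t. the generating set `{a₁, …, a_m}`. -/
noncomputable def lenF {m : ℕ} (g : FreeGroup (Fin m)) : ℕ :=
  sInf {n | ∃ w : FWord m, FreeGroup.mk w = g ∧ w.length = n}

/-- The rank of a word: the maximal `i` such that `aᵢ^{±1}` occurs in it (a letter with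
`Fin`-index `j` is `a_{j+1}`, so it contributes `j+1`); the empty word has rank `0`. -/
def wrank {m : ℕ} (w : FWord m) : ℕ := (w.map (fun x => x.1.val + 1)).foldr max 0

/-- The four types of rank-`i` pieces: `aᵢ u`, `u aᵢ⁻¹`, `aᵢ u aᵢ⁻¹`, `u`. -/
inductive PieceType | head | tail | both | plain
deriving DecidableEq

/-- `π` is a rank-`i` piece of the given type: `aᵢ u`, `u aᵢ⁻¹`, `aᵢ u aᵢ⁻¹` or `u`,
where `u` is a (possibly empty) word of rank at most `i - 1`.  Pieces of the first three
types have strict rank `i`. -/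
def IsPieceType {m : ℕ} (i : ℕ) (t : PieceType) (π : FWord m) : Prop :=
  match t with
  | .head => ∃ (x : Fin m × Bool) (u : FWord m),
      π = x :: u ∧ x.1.val + 1 = i ∧ x.2 = true ∧ wrank u < i
  | .tail => ∃ (x : Fin m × Bool) (u : FWord m),
      π = u ++ [x] ∧ x.1.val + 1 = i ∧ x.2 = false ∧ wrank u < i
  | .both => ∃ (j : Fin m) (u : FWord m),
      π = (j, true) :: (u ++ [(j, false)]) ∧ j.val + 1 = i ∧ wrank u < i
  | .plain => wrank π < i

def IsPiece {m : ℕ} (i : ℕ) (π : FWord m) : Prop := ∃ t, IsPieceType i t π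

/-- The rank-`i` piece decomposition of `w`: a decomposition into rank-`i` pieces
with the minimal possible number of pieces. -/
def IsPieceDecomp {m : ℕ} (i : ℕ) (w : FWord m) (L : List (FWord m)) : Prop :=
  L.flatten = w ∧ (∀ π ∈ L, IsPiece i π) ∧
    ∀ L' : List (FWord m), L'.flatten = w → (∀ π ∈ L', IsPiece i π) → L.length ≤ L'.length

/-- The number of pieces in the rank-`i` decomposition of `w`, for `i = wrank w`. -/
noncomputable def piecesCount {m : ℕ} (w : FWord m) : ℕ :=
  sInf {p | ∃ L : List (FWord m),
    L.flatten = w ∧ (∀ π ∈ L, IsPiece (wrank w) π) ∧ L.length = p}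

/-- The number of pieces of an element of the free group. -/
noncomputable def piecesCountF {m : ℕ} (g : FreeGroup (Fin m)) : ℕ :=
  piecesCount (FreeGroup.toWord g)

section AuxStmt5
open List

variable {α : Type*} [DecidableEq α]

abbrev NR : (α × Bool) → (α × Bool) → Prop := fun a b => b ≠ (a.1, !a.2)

lemma reduced_of_chain' {l : List (α × Bool)} (h : l.Chain' NR) : reduce l = l := by
  induction l with
  | nil => rfl
  | cons x l ih =>
    rw [List.Chain', List.isChain_cons] at h
    rw [reduce.cons, ih h.2]
    cases l with
    | nil => rfl
    | cons hd tl =>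
      have := h.1 hd rfl
      have : ¬(x.1 = hd.1 ∧ x.2 = !hd.2) := by
        rintro ⟨h1, h2⟩
        exact this (Prod.ext h1.symm (by simp [h2]))
      simp [this]

lemma chain'_of_reduced {l : List (α × Bool)} (h : reduce l = l) : l.Chain' NR := by
  rw [List.Chain', List.isChain_iff_getElem]
  intro i hi
  by_contra hbad
  have hdrop : l.drop i = l[i] :: l[i+1] :: l.drop (i+2) := by
    rw [List.drop_eq_getElem_cons (by omega), List.drop_eq_getElem_cons (by omega)]
  have hdecomp : l = l.take i ++ l[i] :: l[i+1] :: l.drop (i+2) := by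
    conv_lhs => rw [← List.take_append_drop i l, hdrop]
  refine reduce.not (L₁ := l) (L₂ := l.take i) (L₃ := l.drop (i+2)) (x := l[i].1) (b := l[i].2) ?_
  rw [h]
  conv_lhs => rw [hdecomp]
  rw [hbad]

lemma reduced_iff_chain' {l : List (α × Bool)} : reduce l = l ↔ l.Chain' NR :=
  ⟨chain'_of_reduced, reduced_of_chain'⟩


variable {m : ℕ}

def LowR (c : ℕ) (g : FreeGroup (Fin m)) : Prop := ∀ x ∈ g.toWord, x.1.val < c

lemma LowR.one {c : ℕ} : LowR c (1 : FreeGroup (Fin m)) := by simp [LowR, toWord_one]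

lemma LowR.mul {c : ℕ} {g h : FreeGroup (Fin m)} (hg : LowR c g) (hh : LowR c h) :
    LowR c (g * h) := by
  intro x hx
  rcases List.mem_append.1 ((toWord_mul_sublist g h).subset hx) with h' | h'
  · exact hg x h'
  · exact hh x h'

lemma LowR.inv {c : ℕ} {g : FreeGroup (Fin m)} (hg : LowR c g) : LowR c g⁻¹ := by
  intro x hx
  rw [toWord_inv] at hx
  simp only [invRev, List.mem_reverse, List.mem_map] at hx
  obtain ⟨y, hy, rfl⟩ := hx
  exact hg y hy

lemma LowR.of {c : ℕ} {a : Fin m} (h : a.val < c) : LowR c (FreeGroup.of a) := by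
  intro x hx
  rw [toWord_of, List.mem_singleton] at hx
  subst hx; exact h

lemma LowR.mono {c c' : ℕ} (hcc : c ≤ c') {g : FreeGroup (Fin m)} (hg : LowR c g) : LowR c' g :=
  fun x hx => lt_of_lt_of_le (hg x hx) hcc

lemma mk_single_true (a : Fin m) : mk [(a, true)] = FreeGroup.of a := rfl

lemma mk_single_false (a : Fin m) : mk [(a, false)] = (FreeGroup.of a)⁻¹ := by
  rw [← mk_single_true, inv_mk]; simp [invRev]

lemma mk_cons (x : Fin m × Bool) (l : FWord m) : mk (x :: l) = mk [x] * mk l := by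
  rw [mul_mk]; rfl

variable {φ : FreeGroup (Fin m) ≃* FreeGroup (Fin m)}

lemma phi_of_decomp (hφ : IsHydraAut m φ) (j : Fin m) :
    ∃ d, LowR j.val d ∧ φ (FreeGroup.of j) = FreeGroup.of j * d := by
  rw [hφ j]
  by_cases h0 : j.val = 0
  · exact ⟨1, LowR.one, by rw [if_pos h0, mul_one]⟩
  · exact ⟨FreeGroup.of ⟨j.val - 1, Nat.lt_of_le_of_lt (Nat.sub_le _ _) j.isLt⟩,
      LowR.of (show j.val - 1 < j.val from Nat.sub_lt (Nat.pos_of_ne_zero h0) one_pos),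
      by rw [if_neg h0]⟩

lemma phiInv_of_decomp (hφ : IsHydraAut m φ) (j : Fin m) :
    ∃ e, LowR j.val e ∧ φ.symm (FreeGroup.of j) = FreeGroup.of j * e := by
  obtain ⟨n, hn⟩ : ∃ n, j.val = n := ⟨_, rfl⟩
  induction n using Nat.strong_induction_on generalizing j with
  | _ n ih =>
  subst hn
  by_cases h0 : j.val = 0
  · refine ⟨1, LowR.one, ?_⟩
    rw [mul_one, MulEquiv.symm_apply_eq, hφ j, if_pos h0]
  · set j' : Fin m := ⟨j.val - 1, Nat.lt_of_le_of_lt (Nat.sub_le _ _) j.isLt⟩ with hj'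
    have hj'v : j'.val = j.val - 1 := rfl
    have hlt : j'.val < j.val := by rw [hj'v]; exact Nat.sub_lt (Nat.pos_of_ne_zero h0) one_pos
    obtain ⟨e', he', heq⟩ := ih j'.val hlt j' rfl
    refine ⟨(φ.symm (FreeGroup.of j'))⁻¹, ?_, ?_⟩
    · rw [heq]
      exact ((LowR.of hlt).mul (he'.mono (le_of_lt hlt))).inv
    · rw [MulEquiv.symm_apply_eq, _root_.map_mul, hφ j, if_neg h0, _root_.map_inv,
        MulEquiv.apply_symm_apply, ← hj', mul_assoc, mul_inv_cancel, mul_one]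

lemma phi_low_word (hφ : IsHydraAut m φ) {c : ℕ} (l : FWord m) (h : ∀ x ∈ l, x.1.val < c) :
    LowR c (φ (mk l)) := by
  induction l with
  | nil => rw [show mk ([] : FWord m) = 1 from rfl, _root_.map_one]; exact LowR.one
  | cons x l ih =>
    rw [mk_cons, _root_.map_mul]
    refine LowR.mul ?_ (ih fun y hy => h y (List.mem_cons_of_mem _ hy))
    have hx : x.1.val < c := h x (List.mem_cons_self)
    obtain ⟨d, hd, heq⟩ := phi_of_decomp hφ x.1
    cases hb : x.2
    · rw [show x = (x.1, false) by rw [← hb], mk_single_false, _root_.map_inv, heq]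
      exact ((LowR.of hx).mul (hd.mono (by omega))).inv
    · rw [show x = (x.1, true) by rw [← hb], mk_single_true, heq]
      exact (LowR.of hx).mul (hd.mono (by omega))

lemma phiInv_low_word (hφ : IsHydraAut m φ) {c : ℕ} (l : FWord m) (h : ∀ x ∈ l, x.1.val < c) :
    LowR c (φ.symm (mk l)) := by
  induction l with
  | nil => rw [show mk ([] : FWord m) = 1 from rfl, _root_.map_one]; exact LowR.one
  | cons x l ih =>
    rw [mk_cons, _root_.map_mul]
    refine LowR.mul ?_ (ih fun y hy => h y (List.mem_cons_of_mem _ hy))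
    have hx : x.1.val < c := h x (List.mem_cons_self)
    obtain ⟨e, he, heq⟩ := phiInv_of_decomp hφ x.1
    cases hb : x.2
    · rw [show x = (x.1, false) by rw [← hb], mk_single_false, _root_.map_inv, heq]
      exact ((LowR.of hx).mul (he.mono (by omega))).inv
    · rw [show x = (x.1, true) by rw [← hb], mk_single_true, heq]
      exact (LowR.of hx).mul (he.mono (by omega))

lemma phi_low (hφ : IsHydraAut m φ) {c : ℕ} {g : FreeGroup (Fin m)} (h : LowR c g) :
    LowR c (φ g) := by
  rw [← mk_toWord (x := g)]; exact phi_low_word hφ _ h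

lemma phiInv_low (hφ : IsHydraAut m φ) {c : ℕ} {g : FreeGroup (Fin m)} (h : LowR c g) :
    LowR c (φ.symm g) := by
  rw [← mk_toWord (x := g)]; exact phiInv_low_word hφ _ h

lemma phi_zpow_low (hφ : IsHydraAut m φ) {c : ℕ} (r : ℤ) {g : FreeGroup (Fin m)} (h : LowR c g) :
    LowR c ((φ ^ r) g) := by
  induction r using Int.induction_on with
  | zero => simpa using h
  | succ n ih => rw [show ((n : ℤ) + 1) = 1 + n by ring, zpow_one_add, MulAut.mul_apply]
                 exact phi_low hφ ih
  | pred n ih => rw [show (-(n : ℤ) - 1) = (-1) + (-n) by ring, zpow_add, zpow_neg_one,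
                   MulAut.mul_apply, MulAut.inv_def]
                 exact phiInv_low hφ ih

lemma phi_zpow_of (hφ : IsHydraAut m φ) (r : ℤ) (j : Fin m) :
    ∃ c, LowR j.val c ∧ (φ ^ r) (FreeGroup.of j) = FreeGroup.of j * c := by
  induction r using Int.induction_on with
  | zero => exact ⟨1, LowR.one, by simp⟩
  | succ n ih =>
    obtain ⟨c, hc, heq⟩ := ih
    obtain ⟨d, hd, hdeq⟩ := phi_of_decomp hφ j
    refine ⟨d * φ c, (hd.mul (phi_low hφ hc)), ?_⟩
    rw [show ((n : ℤ) + 1) = 1 + n by ring, zpow_one_add, MulAut.mul_apply, heq, _root_.map_mul, hdeq,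
      mul_assoc]
  | pred n ih =>
    obtain ⟨c, hc, heq⟩ := ih
    obtain ⟨e, he, heeq⟩ := phiInv_of_decomp hφ j
    refine ⟨e * φ.symm c, (he.mul (phiInv_low hφ hc)), ?_⟩
    rw [show (-(n : ℤ) - 1) = (-1) + (-n) by ring, zpow_add, zpow_neg_one, MulAut.mul_apply,
      MulAut.inv_def, heq, _root_.map_mul, heeq, mul_assoc]


lemma foldr_max_le {l : List ℕ} {c : ℕ} : l.foldr max 0 ≤ c ↔ ∀ a ∈ l, a ≤ c := by
  induction l with
  | nil => simp
  | cons a l ih => simp [Nat.max_le, ih]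

lemma wrank_le_iff {w : FWord m} {c : ℕ} : wrank w ≤ c ↔ ∀ x ∈ w, x.1.val + 1 ≤ c := by
  rw [wrank, foldr_max_le]
  constructor
  · intro h x hx; exact h _ (List.mem_map_of_mem hx)
  · intro h a ha
    obtain ⟨x, hx, rfl⟩ := List.mem_map.1 ha
    exact h x hx

lemma le_wrank {w : FWord m} {x : Fin m × Bool} (hx : x ∈ w) : x.1.val + 1 ≤ wrank w :=
  wrank_le_iff.1 le_rfl x hx

lemma wrank_lt_iff {w : FWord m} {c : ℕ} (hc : 0 < c) :
    wrank w < c ↔ ∀ x ∈ w, x.1.val + 1 < c := by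
  constructor
  · intro h x hx; exact lt_of_le_of_lt (le_wrank hx) h
  · intro h
    have : wrank w ≤ c - 1 := wrank_le_iff.2 fun x hx => by have := h x hx; omega
    omega

lemma LowR_mk_of_wrank {u : FWord m} {c : ℕ} (h : wrank u ≤ c) : LowR c (mk u) := by
  intro x hx
  rw [toWord_mk] at hx
  have hxu : x ∈ u := (reduce.red (L := u)).sublist.subset hx
  have := le_wrank hxu
  omega

lemma wrank_le_of_low {v : FWord m} {c : ℕ} (h : ∀ x ∈ v, x.1.val < c) : wrank v ≤ c :=
  wrank_le_iff.2 fun x hx => h x hx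

-- ====== gluing lemmas ======
lemma toWord_of_mul (j : Fin m) {h : FreeGroup (Fin m)} (hh : LowR j.val h) :
    (FreeGroup.of j * h).toWord = (j, true) :: h.toWord := by
  have he : FreeGroup.of j * h = mk ((j, true) :: h.toWord) := by
    rw [mk_cons, mk_single_true, mk_toWord]
  rw [he, toWord_mk]
  apply reduced_of_chain'
  rw [List.Chain', List.isChain_cons]
  refine ⟨?_, chain'_of_reduced (reduce_toWord h)⟩
  intro y hy
  have hmem := List.mem_of_mem_head? hy
  have := hh y hmem
  intro hcontra
  rw [hcontra] at this
  simp at this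

lemma toWord_mul_ofinv (j : Fin m) {h : FreeGroup (Fin m)} (hh : LowR j.val h) :
    (h * (FreeGroup.of j)⁻¹).toWord = h.toWord ++ [(j, false)] := by
  have he : h * (FreeGroup.of j)⁻¹ = mk (h.toWord ++ [(j, false)]) := by
    rw [← mul_mk, mk_single_false, mk_toWord]
  rw [he, toWord_mk]
  apply reduced_of_chain'
  rw [List.Chain', List.isChain_append]
  refine ⟨chain'_of_reduced (reduce_toWord h), List.isChain_singleton _, ?_⟩
  intro x hx y hy
  have hxm := List.mem_of_mem_getLast? hx
  have hym : y = (j, false) := by simpa using List.mem_of_mem_head? hy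
  have := hh x hxm
  subst hym
  intro hcontra
  rw [show x.1 = j from (Prod.mk.injEq _ _ _ _ ▸ hcontra).1.symm] at this
  omega

lemma toWord_conj (j : Fin m) {h : FreeGroup (Fin m)} (hh : LowR j.val h) (hne : h ≠ 1) :
    (FreeGroup.of j * h * (FreeGroup.of j)⁻¹).toWord
      = (j, true) :: (h.toWord ++ [(j, false)]) := by
  have he : FreeGroup.of j * h * (FreeGroup.of j)⁻¹
      = mk ((j, true) :: (h.toWord ++ [(j, false)])) := by
    rw [mk_cons, mk_single_true, ← mul_mk, mk_single_false, mk_toWord, mul_assoc]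
  rw [he, toWord_mk]
  apply reduced_of_chain'
  have htail : (h.toWord ++ [(j, false)]).Chain' NR := by
    rw [List.Chain', List.isChain_append]
    refine ⟨chain'_of_reduced (reduce_toWord h), List.isChain_singleton _, ?_⟩
    intro x hx y hy
    have hxm := List.mem_of_mem_getLast? hx
    have hym : y = (j, false) := by simpa using List.mem_of_mem_head? hy
    have := hh x hxm
    subst hym
    intro hcontra
    rw [show x.1 = j from (Prod.mk.injEq _ _ _ _ ▸ hcontra).1.symm] at this
    omega
  rw [List.Chain', List.isChain_cons]
  refine ⟨?_, htail⟩
  intro y hy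
  have hnil : h.toWord ≠ [] := fun hcon => hne (toWord_eq_nil_iff.1 hcon)
  cases ht : h.toWord with
  | nil => exact absurd ht hnil
  | cons y0 t =>
    rw [ht] at hy
    simp only [List.cons_append, List.head?_cons, Option.mem_def, Option.some_inj] at hy
    subst hy
    have : y0 ∈ h.toWord := by rw [ht]; exact List.mem_cons_self
    have := hh y0 this
    intro hcontra
    rw [show y0.1 = j from (Prod.mk.injEq _ _ _ _ ▸ hcontra).1] at this
    omega


-- ====== image shape lemmas ======
section Images

lemma image_head (hφ : IsHydraAut m φ) (r : ℤ) (j : Fin m) {u : FWord m} (hu : wrank u ≤ j.val) :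
    ∃ h, LowR j.val h ∧ (φ ^ r) (mk ((j, true) :: u)) = FreeGroup.of j * h := by
  obtain ⟨c, hc, hceq⟩ := phi_zpow_of hφ r j
  refine ⟨c * (φ ^ r) (mk u), hc.mul (phi_zpow_low hφ r (LowR_mk_of_wrank hu)), ?_⟩
  rw [mk_cons, mk_single_true, _root_.map_mul, hceq, mul_assoc]

lemma image_tail (hφ : IsHydraAut m φ) (r : ℤ) (j : Fin m) {u : FWord m} (hu : wrank u ≤ j.val) :
    ∃ h, LowR j.val h ∧ (φ ^ r) (mk (u ++ [(j, false)])) = h * (FreeGroup.of j)⁻¹ := by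
  obtain ⟨c, hc, hceq⟩ := phi_zpow_of hφ r j
  refine ⟨(φ ^ r) (mk u) * c⁻¹, (phi_zpow_low hφ r (LowR_mk_of_wrank hu)).mul hc.inv, ?_⟩
  rw [← mul_mk, mk_single_false, _root_.map_mul, _root_.map_inv, hceq, mul_inv_rev, ← mul_assoc]

lemma image_both (hφ : IsHydraAut m φ) (r : ℤ) (j : Fin m) {u : FWord m} (hu : wrank u ≤ j.val) (hne : mk u ≠ 1) :
    ∃ h, LowR j.val h ∧ h ≠ 1 ∧
      (φ ^ r) (mk ((j, true) :: (u ++ [(j, false)]))) =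
        FreeGroup.of j * h * (FreeGroup.of j)⁻¹ := by
  obtain ⟨c, hc, hceq⟩ := phi_zpow_of hφ r j
  refine ⟨c * (φ ^ r) (mk u) * c⁻¹,
    (hc.mul (phi_zpow_low hφ r (LowR_mk_of_wrank hu))).mul hc.inv, ?_, ?_⟩
  · intro hcon
    apply hne
    have : (φ ^ r) (mk u) = 1 := by
      have := congrArg (fun z => c⁻¹ * z * c) hcon
      simpa [mul_assoc] using this
    exact (MulEquiv.map_eq_one_iff (φ ^ r)).1 this
  · rw [mk_cons, mk_single_true, ← mul_mk, mk_single_false]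
    rw [_root_.map_mul, _root_.map_mul, _root_.map_inv, hceq]
    group

lemma image_plain (hφ : IsHydraAut m φ) (r : ℤ) {π : FWord m} {c : ℕ} (hπ : wrank π ≤ c) :
    LowR c ((φ ^ r) (mk π)) :=
  phi_zpow_low hφ r (LowR_mk_of_wrank hπ)

end Images

-- ====== boundary facts ======
section Boundary
variable {i : ℕ} {j : Fin m}

lemma low_ne_j (hij : i = j.val + 1) {u : FWord m} (hu : wrank u < i) {x : Fin m × Bool}
    (hx : x ∈ u) : x.1 ≠ j := by
  have h1 := le_wrank hx
  intro hc
  rw [hc] at h1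
  omega

lemma fin_eq_j (hij : i = j.val + 1) {a : Fin m} (ha : a.val + 1 = i) : a = j :=
  Fin.ext (by omega)

lemma piece_head_last (hij : i = j.val + 1) {π : FWord m} (h : IsPieceType i .head π) :
    π.head? = some (j, true) ∧ ∀ x ∈ π.getLast?, x ≠ ((j : Fin m), false) := by
  obtain ⟨x, u, rfl, hx1, hx2, hu⟩ := h
  have hxj : x = (j, true) := by
    rw [← fin_eq_j hij hx1, ← hx2]
  subst hxj
  refine ⟨rfl, ?_⟩
  intro y hy
  rcases List.mem_cons.1 (List.mem_of_mem_getLast? hy) with rfl | hyu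
  · simp
  · intro hc; exact low_ne_j hij hu hyu (by rw [hc])

lemma piece_tail_last (hij : i = j.val + 1) {π : FWord m} (h : IsPieceType i .tail π) :
    π.getLast? = some (j, false) ∧ ∀ y ∈ π.head?, y ≠ ((j : Fin m), true) := by
  obtain ⟨x, u, rfl, hx1, hx2, hu⟩ := h
  have hxj : x = (j, false) := by
    rw [← fin_eq_j hij hx1, ← hx2]
  subst hxj
  refine ⟨List.getLast?_concat, ?_⟩
  intro y hy
  rcases List.mem_append.1 (List.mem_of_mem_head? hy) with hyu | hy2
  · intro hc; exact low_ne_j hij hu hyu (by rw [hc])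
  · simp only [List.mem_singleton] at hy2
    subst hy2; simp

lemma piece_both_last (hij : i = j.val + 1) {π : FWord m} (h : IsPieceType i .both π) :
    π.head? = some (j, true) ∧ π.getLast? = some (j, false) := by
  obtain ⟨j', u, hπ, hj', hu⟩ := h
  rw [fin_eq_j hij hj'] at hπ
  subst hπ
  refine ⟨rfl, ?_⟩
  rw [show ((j, true) :: (u ++ [(j, false)])) = ((j, true) :: u) ++ [(j, false)] by simp,
    List.getLast?_concat]

lemma piece_plain_last (hij : i = j.val + 1) {π : FWord m} (h : IsPieceType i .plain π) :
    (∀ x ∈ π.getLast?, x.1 ≠ j) ∧ ∀ y ∈ π.head?, y.1 ≠ j := by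
  exact ⟨fun x hx => low_ne_j hij h (List.mem_of_mem_getLast? hx),
    fun y hy => low_ne_j hij h (List.mem_of_mem_head? hy)⟩

-- u-part of a reduced `both` piece is reduced, nonempty
lemma both_u_facts (hij : i = j.val + 1) {u : FWord m} 
    (hred : Reduced ((j, true) :: (u ++ [(j, false)]) : FWord m)) : mk u ≠ 1 := by
  have hch : ((j, true) :: (u ++ [(j, false)]) : FWord m).Chain' NR := chain'_of_reduced hred
  have hune : u ≠ [] := by
    rintro rfl
    rw [List.nil_append, List.Chain', List.isChain_cons_cons] at hch
    exact hch.1 rfl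
  have hured : reduce u = u := by
    apply reduced_of_chain'
    refine hch.infix ⟨[(j, true)], [(j, false)], by simp⟩
  intro hc
  have : toWord (mk u) = [] := by rw [hc, toWord_one]
  rw [toWord_mk, hured] at this
  exact hune this

-- image toWord forms
lemma image_head_toWord (hφ : IsHydraAut m φ) (r : ℤ) (j : Fin m) {u : FWord m}
    (hu : wrank u ≤ j.val) :
    ∃ h, LowR j.val h ∧
      toWord ((φ ^ r) (mk ((j, true) :: u))) = (j, true) :: h.toWord := by
  obtain ⟨h, hh, heq⟩ := image_head hφ r j hu
  exact ⟨h, hh, by rw [heq, toWord_of_mul j hh]⟩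

lemma image_tail_toWord (hφ : IsHydraAut m φ) (r : ℤ) (j : Fin m) {u : FWord m}
    (hu : wrank u ≤ j.val) :
    ∃ h, LowR j.val h ∧
      toWord ((φ ^ r) (mk (u ++ [(j, false)]))) = h.toWord ++ [(j, false)] := by
  obtain ⟨h, hh, heq⟩ := image_tail hφ r j hu
  exact ⟨h, hh, by rw [heq, toWord_mul_ofinv j hh]⟩

lemma image_both_toWord (hφ : IsHydraAut m φ) (r : ℤ) (j : Fin m) {u : FWord m}
    (hu : wrank u ≤ j.val) (hne : mk u ≠ 1) :
    ∃ h, LowR j.val h ∧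
      toWord ((φ ^ r) (mk ((j, true) :: (u ++ [(j, false)]))))
        = (j, true) :: (h.toWord ++ [(j, false)]) := by
  obtain ⟨h, hh, hne1, heq⟩ := image_both hφ r j hu hne
  exact ⟨h, hh, by rw [heq, toWord_conj j hh hne1]⟩

end Boundary

-- ====== image of a piece is a piece; nonempty ======
lemma image_ne {π : FWord m} (hπred : Reduced π) (hπne : π ≠ []) (r : ℤ) :
    toWord ((φ ^ r) (mk π)) ≠ [] := by
  intro hc
  have h1 : (φ ^ r) (mk π) = 1 := toWord_eq_nil_iff.1 hc
  have h2 : mk π = 1 := (MulEquiv.map_eq_one_iff (φ ^ r)).1 h1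
  have h3 : toWord (mk π) = [] := by rw [h2, toWord_one]
  rw [toWord_mk, hπred] at h3
  exact hπne h3

lemma image_isPieceType (hφ : IsHydraAut m φ) (r : ℤ) {i : ℕ} {j : Fin m}
    (hij : i = j.val + 1) {π : FWord m} {t : PieceType} (ht : IsPieceType i t π)
    (hπred : Reduced π) : IsPieceType i t (toWord ((φ ^ r) (mk π))) := by
  cases t with
  | head =>
    obtain ⟨x, u, hp, hx1, hx2, hu⟩ := ht
    have hxe : x = (j, true) := by rw [← fin_eq_j hij hx1, ← hx2]
    subst hxe hp
    obtain ⟨h, hh, heq⟩ := image_head_toWord hφ r j (show wrank u ≤ j.val by omega)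
    exact ⟨(j, true), h.toWord, heq, by simpa using hij.symm, rfl,
      lt_of_le_of_lt (wrank_le_of_low hh) (by omega)⟩
  | tail =>
    obtain ⟨x, u, hp, hx1, hx2, hu⟩ := ht
    have hxe : x = (j, false) := by rw [← fin_eq_j hij hx1, ← hx2]
    subst hxe hp
    obtain ⟨h, hh, heq⟩ := image_tail_toWord hφ r j (show wrank u ≤ j.val by omega)
    exact ⟨(j, false), h.toWord, heq, by simpa using hij.symm, rfl,
      lt_of_le_of_lt (wrank_le_of_low hh) (by omega)⟩
  | both =>
    obtain ⟨j', u, hp, hj', hu⟩ := ht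
    rw [fin_eq_j hij hj'] at hp
    subst hp
    obtain ⟨h, hh, heq⟩ := image_both_toWord hφ r j (show wrank u ≤ j.val by omega)
      (both_u_facts hij hπred)
    exact ⟨j, h.toWord, heq, by omega,
      lt_of_le_of_lt (wrank_le_of_low hh) (by omega)⟩
  | plain =>
    exact lt_of_le_of_lt
      (wrank_le_of_low (image_plain hφ r (show wrank π ≤ j.val by
        have := ht; simp only [IsPieceType] at this; omega)))
      (by omega)

-- ====== junction lemma ======
lemma junction_core (hφ : IsHydraAut m φ) {i : ℕ} {j : Fin m} (hij : i = j.val + 1)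
    {a b : FWord m} (ha : IsPiece i a) (hb : IsPiece i b)
    (hared : Reduced a) (hbred : Reduced b)
    (hbd : ∀ x ∈ a.getLast?, ∀ y ∈ b.head?, y ≠ (x.1, !x.2))
    (hnomerge : a.getLast? = some ((j : Fin m), false) ∨ b.head? = some ((j : Fin m), true))
    (r : ℤ) :
    ∀ x ∈ (toWord ((φ ^ r) (mk a))).getLast?, ∀ y ∈ (toWord ((φ ^ r) (mk b))).head?,
      y ≠ (x.1, !x.2) := by
  obtain ⟨ta, hta⟩ := ha
  obtain ⟨tb, htb⟩ := hb
  rcases hnomerge with hL | hR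
  · -- Case L : a ends with (j, false)
    have hAlast : (toWord ((φ ^ r) (mk a))).getLast? = some ((j : Fin m), false) := by
      cases ta with
      | head =>
        exact absurd rfl ((piece_head_last hij hta).2 _ (by rw [hL]; rfl))
      | plain =>
        exact absurd rfl ((piece_plain_last hij hta).1 _ (show ((j : Fin m), false) ∈ a.getLast? by
            rw [hL]; rfl))
      | tail =>
        obtain ⟨x, u, hp, hx1, hx2, hu⟩ := hta
        have hxe : x = (j, false) := by rw [← fin_eq_j hij hx1, ← hx2]
        subst hxe hp
        obtain ⟨h, hh, heq⟩ := image_tail_toWord hφ r j (show wrank u ≤ j.val by omega)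
        rw [heq, List.getLast?_concat]
      | both =>
        obtain ⟨j', u, hp, hj', hu⟩ := hta
        rw [fin_eq_j hij hj'] at hp
        subst hp
        obtain ⟨h, hh, heq⟩ := image_both_toWord hφ r j (show wrank u ≤ j.val by omega)
          (both_u_facts hij hared)
        rw [heq, show ((j, true) :: (h.toWord ++ [(j, false)]) : FWord m)
          = ((j, true) :: h.toWord) ++ [(j, false)] by simp, List.getLast?_concat]
    have hBhead : ∀ y ∈ (toWord ((φ ^ r) (mk b))).head?, y ≠ ((j : Fin m), true) := by
      have hbh : ∀ y ∈ b.head?, y ≠ ((j : Fin m), true) := by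
        intro y hy hc
        subst hc
        exact hbd _ (by rw [hL]; rfl) _ hy rfl
      cases tb with
      | head => exact absurd rfl (hbh _ (by rw [(piece_head_last hij htb).1]; rfl))
      | both => exact absurd rfl (hbh _ (by rw [(piece_both_last hij htb).1]; rfl))
      | tail =>
        obtain ⟨x, u, hp, hx1, hx2, hu⟩ := htb
        have hxe : x = (j, false) := by rw [← fin_eq_j hij hx1, ← hx2]
        subst hxe hp
        obtain ⟨h, hh, heq⟩ := image_tail_toWord hφ r j (show wrank u ≤ j.val by omega)
        rw [heq]
        intro y hy
        rcases List.mem_append.1 (List.mem_of_mem_head? hy) with hyu | hy2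
        · intro hc; have := hh y hyu; rw [hc] at this; simp at this
        · simp only [List.mem_singleton] at hy2; subst hy2; simp
      | plain =>
        intro y hy hc
        have := image_plain hφ (c := j.val) r (show wrank b ≤ j.val by
          have := htb; simp only [IsPieceType] at this; omega) y (List.mem_of_mem_head? hy)
        rw [hc] at this; simp at this
    intro x hx y hy
    rw [hAlast] at hx
    have hxe : ((j : Fin m), false) = x := by simpa using hx
    subst hxe
    simpa using hBhead y hy
  · -- Case R : b starts with (j, true)
    have hBhead : (toWord ((φ ^ r) (mk b))).head? = some ((j : Fin m), true) := by
      cases tb with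
      | tail =>
        exact absurd rfl ((piece_tail_last hij htb).2 _ (by rw [hR]; rfl))
      | plain =>
        exact absurd rfl ((piece_plain_last hij htb).2 _ (show ((j : Fin m), true) ∈ b.head? by
            rw [hR]; rfl))
      | head =>
        obtain ⟨x, u, hp, hx1, hx2, hu⟩ := htb
        have hxe : x = (j, true) := by rw [← fin_eq_j hij hx1, ← hx2]
        subst hxe hp
        obtain ⟨h, hh, heq⟩ := image_head_toWord hφ r j (show wrank u ≤ j.val by omega)
        rw [heq]; rfl
      | both =>
        obtain ⟨j', u, hp, hj', hu⟩ := htb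
        rw [fin_eq_j hij hj'] at hp
        subst hp
        obtain ⟨h, hh, heq⟩ := image_both_toWord hφ r j (show wrank u ≤ j.val by omega)
          (both_u_facts hij hbred)
        rw [heq]; rfl
    have hAlast : ∀ x ∈ (toWord ((φ ^ r) (mk a))).getLast?, x ≠ ((j : Fin m), false) := by
      have hal : ∀ x ∈ a.getLast?, x ≠ ((j : Fin m), false) := by
        intro x hx hc
        subst hc
        exact hbd _ hx _ (by rw [hR]; rfl) rfl
      cases ta with
      | tail => exact absurd rfl (hal _ (by rw [(piece_tail_last hij hta).1]; rfl))
      | both => exact absurd rfl (hal _ (by rw [(piece_both_last hij hta).2]; rfl))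
      | head =>
        obtain ⟨x, u, hp, hx1, hx2, hu⟩ := hta
        have hxe : x = (j, true) := by rw [← fin_eq_j hij hx1, ← hx2]
        subst hxe hp
        obtain ⟨h, hh, heq⟩ := image_head_toWord hφ r j (show wrank u ≤ j.val by omega)
        rw [heq]
        intro x hx
        rcases List.mem_cons.1 (List.mem_of_mem_getLast? hx) with rfl | hxu
        · simp
        · intro hc; have := hh x hxu; rw [hc] at this; simp at this
      | plain =>
        intro x hx hc
        have := image_plain hφ (c := j.val) r (show wrank a ≤ j.val by
          have := hta; simp only [IsPieceType] at this; omega) x (List.mem_of_mem_getLast? hx)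
        rw [hc] at this; simp at this
    intro x hx y hy
    rw [hBhead] at hy
    have hye : ((j : Fin m), true) = y := by simpa using hy
    subst hye
    intro hc
    apply hAlast x hx
    obtain ⟨x1, x2⟩ := x
    cases x2
    · have h1 : j = x1 := congrArg Prod.fst hc
      rw [← h1]
    · exfalso
      have h2 : (true : Bool) = !true := congrArg Prod.snd hc
      simp at h2

-- ====== decomposition facts ======
lemma decomp_no_nil {i : ℕ} {w : FWord m} {L : List (FWord m)} (hL : IsPieceDecomp i w L) :
    ∀ π ∈ L, π ≠ [] := by
  intro π hπ hc
  subst hc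
  obtain ⟨l1, l2, rfl⟩ := List.append_of_mem hπ
  have hflat : (l1 ++ l2).flatten = w := by rw [← hL.1]; simp
  have hp : ∀ π ∈ l1 ++ l2, IsPiece i π := by
    intro π h
    rcases List.mem_append.1 h with h | h
    · exact hL.2.1 _ (List.mem_append.2 (Or.inl h))
    · exact hL.2.1 _ (List.mem_append.2 (Or.inr (List.mem_cons_of_mem _ h)))
  have hlen := hL.2.2 _ hflat hp
  simp [List.length_append] at hlen

lemma decomp_reduced {i : ℕ} {w : FWord m} {L : List (FWord m)} (hred : Reduced w)
    (hL : IsPieceDecomp i w L) : ∀ π ∈ L, Reduced π := by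
  intro π hπ
  obtain ⟨l1, l2, rfl⟩ := List.append_of_mem hπ
  apply reduced_of_chain'
  apply (chain'_of_reduced hred).infix
  refine ⟨l1.flatten, l2.flatten, ?_⟩
  rw [← hL.1]
  simp [List.flatten_append]

lemma mk_flatten_images (r : ℤ) (L : List (FWord m)) :
    mk (L.map fun π => toWord ((φ ^ r) (mk π))).flatten = (φ ^ r) (mk L.flatten) := by
  induction L with
  | nil =>
    show mk [] = (φ ^ r) (mk [])
    rw [show (mk ([] : FWord m)) = 1 from rfl, _root_.map_one]
  | cons π L ih =>
    rw [List.map_cons, List.flatten_cons, List.flatten_cons, ← mul_mk, ← mul_mk, ih,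
      mk_toWord, ← _root_.map_mul]

lemma reduced_flatten {Ls : List (FWord m)} (hred : ∀ A ∈ Ls, Reduced A)
    (hne : ∀ A ∈ Ls, A ≠ [])
    (hch : Ls.Chain' (fun A B => ∀ x ∈ A.getLast?, ∀ y ∈ B.head?, y ≠ (x.1, !x.2))) :
    Reduced Ls.flatten := by
  induction Ls with
  | nil => rfl
  | cons A Ls ih =>
    rw [List.flatten_cons]
    apply reduced_of_chain'
    rw [List.Chain', List.isChain_append]
    refine ⟨chain'_of_reduced (hred A (List.mem_cons_self)),
      chain'_of_reduced (ih (fun B hB => hred B (List.mem_cons_of_mem _ hB))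
        (fun B hB => hne B (List.mem_cons_of_mem _ hB)) hch.tail), ?_⟩
    intro x hx y hy
    cases Ls with
    | nil => simp at hy
    | cons B Ls' =>
      have hBne := hne B (List.mem_cons_of_mem _ (List.mem_cons_self))
      cases hB : B with
      | nil => exact absurd hB hBne
      | cons b0 bt =>
        rw [List.flatten_cons, hB, List.cons_append, List.head?_cons] at hy
        have hyB : y ∈ B.head? := by rw [hB]; exact hy
        exact (List.isChain_cons_cons.1 hch).1 x hx y hyB

lemma exists_min_decomp (i : ℕ) (w : FWord m) (L' : List (FWord m))
    (h1 : L'.flatten = w) (h2 : ∀ π ∈ L', IsPiece i π) :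
    ∃ M, IsPieceDecomp i w M ∧ M.length ≤ L'.length := by
  set S : Set ℕ := {n | ∃ M : List (FWord m),
    M.flatten = w ∧ (∀ π ∈ M, IsPiece i π) ∧ M.length = n} with hS
  have hmem : L'.length ∈ S := ⟨L', h1, h2, rfl⟩
  obtain ⟨M, hM1, hM2, hM3⟩ := Nat.sInf_mem (Set.nonempty_of_mem hmem)
  exact ⟨M, ⟨hM1, hM2, fun L'' hf hp => hM3 ▸ Nat.sInf_le ⟨L'', hf, hp, rfl⟩⟩,
    hM3 ▸ Nat.sInf_le hmem⟩

-- ====== main auxiliary lemma ======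
lemma main_aux (hφ : IsHydraAut m φ) (i : ℕ) (w : FWord m) (hred : Reduced w)
    (hrank : wrank w = i) (L : List (FWord m)) (hL : IsPieceDecomp i w L) (r : ℤ) :
    ((L.map fun π => toWord ((φ ^ r) (mk π))).Chain'
        (fun A B => ∀ x ∈ A.getLast?, ∀ y ∈ B.head?, y ≠ (x.1, !x.2))) ∧
    Reduced (L.map fun π => toWord ((φ ^ r) (mk π))).flatten ∧
    (L.map fun π => toWord ((φ ^ r) (mk π))).flatten = toWord ((φ ^ r) (mk w)) ∧
    (∀ π' ∈ L.map fun π => toWord ((φ ^ r) (mk π)), IsPiece i π') := by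
  by_cases hw : w = []
  · subst hw
    have hL0 : L = [] := by
      have := hL.2.2 [] rfl (by intro π h; simp at h)
      simpa [List.length_eq_zero_iff] using this
    subst hL0
    refine ⟨List.isChain_nil, rfl, ?_, by intro π' h; simp at h⟩
    show ([] : FWord m) = toWord ((φ ^ r) (mk []))
    rw [show (mk ([] : FWord m)) = 1 from rfl, _root_.map_one, toWord_one]
  · -- setup
    have hi1 : 1 ≤ i := by
      obtain ⟨x, t, rfl⟩ := List.exists_cons_of_ne_nil hw
      have := le_wrank (List.mem_cons_self (a := x) (l := t))
      omega
    have him : i ≤ m := by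
      rw [← hrank]
      exact wrank_le_iff.2 fun x _ => x.1.isLt
    set j : Fin m := ⟨i - 1, by omega⟩ with hj
    have hij : i = j.val + 1 := by rw [hj]; simp; omega
    have hneL := decomp_no_nil hL
    have hredL := decomp_reduced hred hL
    -- chain' of images
    have hchain : ((L.map fun π => toWord ((φ ^ r) (mk π))).Chain'
        (fun A B => ∀ x ∈ A.getLast?, ∀ y ∈ B.head?, y ≠ (x.1, !x.2))) := by
      rw [List.Chain', List.isChain_iff_getElem]
      intro k hk
      simp only [List.length_map] at hk
      simp only [List.get_eq_getElem, List.getElem_map]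
      have hk1 : k < L.length := by omega
      have hk2 : k + 1 < L.length := by omega
      set a := L[k] with hadef
      set b := L[k+1] with hbdef
      have hamem : a ∈ L := List.getElem_mem hk1
      have hbmem : b ∈ L := List.getElem_mem hk2
      have hLd : L = L.take k ++ a :: b :: L.drop (k+2) := by
        conv_lhs => rw [← List.take_append_drop k L]
        rw [List.drop_eq_getElem_cons hk1, List.drop_eq_getElem_cons hk2]
      -- boundary condition in w
      have hab : (a ++ b).Chain' NR := by
        apply (chain'_of_reduced hred).infix
        refine ⟨(L.take k).flatten, (L.drop (k+2)).flatten, ?_⟩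
        rw [← hL.1]
        conv_rhs => rw [hLd]
        simp [List.flatten_append, List.append_assoc]
      have hbd : ∀ x ∈ a.getLast?, ∀ y ∈ b.head?, y ≠ (x.1, !x.2) :=
        (List.isChain_append.1 hab).2.2
      -- no-merge condition
      have hnomerge : a.getLast? = some ((j : Fin m), false)
          ∨ b.head? = some ((j : Fin m), true) := by
        by_contra hcon
        push_neg at hcon
        obtain ⟨h1, h2⟩ := hcon
        obtain ⟨ta, hta⟩ := hL.2.1 a hamem
        obtain ⟨tb, htb⟩ := hL.2.1 b hbmem
        have hmerge : IsPiece i (a ++ b) := by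
          cases ta with
          | tail => exact absurd (piece_tail_last hij hta).1 h1
          | both => exact absurd (piece_both_last hij hta).2 h1
          | head =>
            obtain ⟨x, u, hp, hx1, hx2, hu⟩ := hta
            have hxe : x = (j, true) := by rw [← fin_eq_j hij hx1, ← hx2]
            subst hxe
            rw [hp]
            cases tb with
            | head => exact absurd (piece_head_last hij htb).1 h2
            | both => exact absurd (piece_both_last hij htb).1 h2
            | tail =>
              obtain ⟨y, u', hq, hy1, hy2, hu'⟩ := htb
              have hye : y = (j, false) := by rw [← fin_eq_j hij hy1, ← hy2]
              subst hye
              rw [hq]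
              refine ⟨.both, j, u ++ u', by simp, by omega, ?_⟩
              rw [wrank_lt_iff (by omega)]
              intro z hz
              rcases List.mem_append.1 hz with h | h
              · exact (wrank_lt_iff (by omega)).1 hu z h
              · exact (wrank_lt_iff (by omega)).1 hu' z h
            | plain =>
              refine ⟨.head, (j, true), u ++ b, by simp, by simpa using hij.symm, rfl, ?_⟩
              rw [wrank_lt_iff (by omega)]
              intro z hz
              rcases List.mem_append.1 hz with h | h
              · exact (wrank_lt_iff (by omega)).1 hu z h
              · exact (wrank_lt_iff (by omega)).1 htb z h
          | plain =>
            cases tb with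
            | head => exact absurd (piece_head_last hij htb).1 h2
            | both => exact absurd (piece_both_last hij htb).1 h2
            | tail =>
              obtain ⟨y, u', hq, hy1, hy2, hu'⟩ := htb
              have hye : y = (j, false) := by rw [← fin_eq_j hij hy1, ← hy2]
              subst hye
              rw [hq]
              refine ⟨.tail, (j, false), a ++ u', by rw [List.append_assoc],
                by simpa using hij.symm, rfl, ?_⟩
              rw [wrank_lt_iff (by omega)]
              intro z hz
              rcases List.mem_append.1 hz with h | h
              · exact (wrank_lt_iff (by omega)).1 hta z h
              · exact (wrank_lt_iff (by omega)).1 hu' z h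
            | plain =>
              refine ⟨.plain, ?_⟩
              show wrank (a ++ b) < i
              rw [wrank_lt_iff (by omega)]
              intro z hz
              rcases List.mem_append.1 hz with h | h
              · exact (wrank_lt_iff (by omega)).1 hta z h
              · exact (wrank_lt_iff (by omega)).1 htb z h
        -- shorter decomposition
        set L' : List (FWord m) := L.take k ++ (a ++ b) :: L.drop (k+2) with hL'
        have hfl : L'.flatten = w := by
          rw [← hL.1]
          conv_rhs => rw [hLd]
          simp [hL', List.flatten_append, List.append_assoc]
        have hps : ∀ π ∈ L', IsPiece i π := by
          intro π h
          rcases List.mem_append.1 h with h | h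
          · exact hL.2.1 _ (List.take_subset _ _ h)
          · rcases List.mem_cons.1 h with rfl | h
            · exact hmerge
            · exact hL.2.1 _ (List.drop_subset _ _ h)
        have hlen := hL.2.2 L' hfl hps
        have hlen' : L'.length = L.length - 1 := by
          rw [hL']
          simp [List.length_append, List.length_take, List.length_drop]
          omega
        omega
      exact junction_core hφ hij (hL.2.1 a hamem) (hL.2.1 b hbmem)
        (hredL a hamem) (hredL b hbmem) hbd hnomerge r
    refine ⟨hchain, ?_, ?_, ?_⟩
    · apply reduced_flatten ?_ ?_ hchain
      · intro A hA
        obtain ⟨π, hπ, rfl⟩ := List.mem_map.1 hA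
        exact reduce_toWord _
      · intro A hA
        obtain ⟨π, hπ, rfl⟩ := List.mem_map.1 hA
        exact image_ne (hredL π hπ) (hneL π hπ) r
    · have h1 : mk (L.map fun π => toWord ((φ ^ r) (mk π))).flatten = (φ ^ r) (mk w) := by
        rw [mk_flatten_images, hL.1]
      have h2 : Reduced (L.map fun π => toWord ((φ ^ r) (mk π))).flatten := by
        apply reduced_flatten ?_ ?_ hchain
        · intro A hA
          obtain ⟨π, hπ, rfl⟩ := List.mem_map.1 hA
          exact reduce_toWord _
        · intro A hA
          obtain ⟨π, hπ, rfl⟩ := List.mem_map.1 hA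
          exact image_ne (hredL π hπ) (hneL π hπ) r
      rw [← h1, toWord_mk, h2]
    · intro π' hπ'
      obtain ⟨π, hπ, rfl⟩ := List.mem_map.1 hπ'
      obtain ⟨t, ht⟩ := hL.2.1 π hπ
      exact ⟨t, image_isPieceType hφ r hij ht (hredL π hπ)⟩

lemma zpow_cancel (r : ℤ) (g : FreeGroup (Fin m)) : (φ ^ (-r)) ((φ ^ r) g) = g := by
  rw [← MulAut.mul_apply, ← zpow_add, neg_add_cancel, zpow_zero, MulAut.one_apply]

lemma wrank_image (hφ : IsHydraAut m φ) (r : ℤ) {w : FWord m} (hred : Reduced w) :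
    wrank (toWord ((φ ^ r) (mk w))) = wrank w := by
  have d1 : ∀ (s : ℤ) (v : FWord m), Reduced v →
      wrank (toWord ((φ ^ s) (mk v))) ≤ wrank v := by
    intro s v hv
    apply wrank_le_of_low
    apply phi_zpow_low hφ s
    intro x hx
    rw [toWord_mk, hv] at hx
    have := le_wrank hx
    omega
  apply le_antisymm (d1 r w hred)
  have h2 := d1 (-r) (toWord ((φ ^ r) (mk w))) (reduce_toWord _)
  rw [mk_toWord, zpow_cancel] at h2
  rw [toWord_mk, hred] at h2
  exact h2

end AuxStmt5

/-- Lemma 3.2: in a rank-`i` piece decomposition there is no cancellation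
between consecutive pieces after applying `φ^{±1}`, and applying `φ^r` piecewise gives the
rank-`i` decomposition of `φ^r(w)`. -/
theorem stmt_5 (m : ℕ) (hm : 2 ≤ m)
    (φ : FreeGroup (Fin m) ≃* FreeGroup (Fin m)) (hφ : IsHydraAut m φ)
    (i : ℕ) (w : FWord m) (hred : Reduced w) (hrank : wrank w = i)
    (L : List (FWord m)) (hL : IsPieceDecomp i w L) :
    (∀ k : ℕ, k + 1 < L.length → ∀ ε : ℤ, ε = 1 ∨ ε = -1 →
      ∀ x y : Fin m × Bool,
        (FreeGroup.toWord ((φ ^ ε) (FreeGroup.mk (L.getD k [])))).getLast? = some x →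
        (FreeGroup.toWord ((φ ^ ε) (FreeGroup.mk (L.getD (k+1) [])))).head? = some y →
        y ≠ (x.1, !x.2)) ∧
    (∀ r : ℤ,
      Reduced ((L.map (fun π => FreeGroup.toWord ((φ ^ r) (FreeGroup.mk π)))).flatten) ∧
      (L.map (fun π => FreeGroup.toWord ((φ ^ r) (FreeGroup.mk π)))).flatten =
        FreeGroup.toWord ((φ ^ r) (FreeGroup.mk w)) ∧
      IsPieceDecomp i (FreeGroup.toWord ((φ ^ r) (FreeGroup.mk w)))
        (L.map (fun π => FreeGroup.toWord ((φ ^ r) (FreeGroup.mk π))))) := by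

  constructor
  · intro k hk ε _ x y hx hy
    have hch := (main_aux hφ i w hred hrank L hL ε).1
    rw [List.Chain', List.isChain_iff_getElem] at hch
    have hk' : k + 1 < (L.map fun π => toWord ((φ ^ ε) (mk π))).length := by
      simp only [List.length_map]; omega
    have hrel := hch k hk'
    simp only [List.get_eq_getElem, List.getElem_map] at hrel
    rw [List.getD_eq_getElem L [] (by omega)] at hx
    rw [List.getD_eq_getElem L [] (by omega)] at hy
    exact hrel x hx y hy
  · intro r
    obtain ⟨hch, hfred, hfeq, hpieces⟩ := main_aux hφ i w hred hrank L hL r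
    refine ⟨hfred, hfeq, hfeq, hpieces, ?_⟩
    intro L'' hf hp
    rw [List.length_map]
    obtain ⟨M, hM, hMle⟩ := exists_min_decomp i _ L'' hf hp
    have hw' : Reduced (toWord ((φ ^ r) (mk w))) := reduce_toWord _
    have hwr : wrank (toWord ((φ ^ r) (mk w))) = i := by rw [wrank_image hφ r hred, hrank]
    obtain ⟨_, _, hfeq2, hpieces2⟩ := main_aux hφ i _ hw' hwr M hM (-r)
    have hback : toWord ((φ ^ (-r)) (mk (toWord ((φ ^ r) (mk w))))) = w := by
      rw [mk_toWord, zpow_cancel, toWord_mk, hred]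
    have hlen := hL.2.2 (M.map fun π => toWord ((φ ^ (-r)) (mk π)))
      (by rw [hfeq2, hback]) hpieces2
    rw [List.length_map] at hlen
    omega
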